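/- Let χ:[0,∞)→ℂ be measurable with χ(t)=1 for 0 ≤ t ≤ 1 and |χ(t)| ≤ 1 for all t, and let σ be the corresponding solution of the integral equation. Then for every complex s with Re(s) > 0, L(σ, s) = (1/s)·exp( −L( (1−χ(v))/v, s ) ), where L(g,s) := ∫_0^∞ g(t) e^{−st} dt denotes the Laplace transform. -/

import Mathlib

open MeasureTheory Filter Real

noncomputable section

/-- `χ` is measurable, equals `1` on `[0,1]`, and has `|χ| ≤ 1` on `[0,∞)`
(complex-valued case). -/
def ChiOKC (χ : ℝ → ℂ) : Prop :=
  Measurable χ ∧ (∀ t : ℝ, 0 ≤ t → t ≤ 1 → χ t = 1) ∧ (∀ t : ℝ, 0 ≤ t → ‖χ t‖ ≤ 1)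

/-- `σ` is the (unique) continuous solution of `u σ(u) = ∫_0^u χ(t) σ(u-t) dt` with
`σ = 1` on `[0,1]` (complex-valued case). -/
def IsSolnC (χ σ : ℝ → ℂ) : Prop :=
  ContinuousOn σ (Set.Ici 0) ∧ (∀ u : ℝ, 0 ≤ u → u ≤ 1 → σ u = 1) ∧
    ∀ u : ℝ, 1 < u → (u : ℂ) * σ u = ∫ t in (0:ℝ)..u, χ t * σ (u - t)

/-- The Laplace transform `L(g,s) = ∫_0^∞ g(t) e^{-st} dt`. -/
def Laplace (g : ℝ → ℂ) (s : ℂ) : ℂ :=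
  ∫ t in Set.Ioi (0:ℝ), g t * Complex.exp (-s * t)

open Set

lemma GS_norm_exp (s : ℂ) (t : ℝ) : ‖Complex.exp (-s*t)‖ = Real.exp (-s.re*t) := by
  rw [Complex.norm_exp]
  congr 1
  simp [Complex.mul_re]

lemma GS_exp_deriv {s : ℂ} (hs : s ≠ 0) (x : ℝ) :
    HasDerivAt (fun t : ℝ => -Complex.exp (-s*t)/s) (Complex.exp (-s*x)) x := by
  have h1 : HasDerivAt (fun y : ℂ => -Complex.exp (-s*y)/s) (Complex.exp (-s*x)) (x : ℂ) := by
    have h0 : HasDerivAt (fun y : ℂ => -s*y) (-s) (x:ℂ) := by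
      simpa using (hasDerivAt_id (x:ℂ)).const_mul (-s)
    have := (Complex.hasDerivAt_exp (-s*(x:ℂ))).comp (x:ℂ) h0
    have h2 := ((this.neg).div_const s)
    refine h2.congr_deriv ?_
    rw [div_eq_iff hs]; ring
  exact h1.comp_ofReal

lemma GS_exp_integrableOn {s : ℂ} (hs : 0 < s.re) (a : ℝ) :
    IntegrableOn (fun t : ℝ => Complex.exp (-s*t)) (Ioi a) := by
  apply Integrable.mono' (exp_neg_integrableOn_Ioi a hs)
  · exact (Complex.continuous_exp.comp (by continuity)).aestronglyMeasurable
  · filter_upwards with t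
    rw [GS_norm_exp]

lemma GS_exp_integral {s : ℂ} (hs : 0 < s.re) (a : ℝ) :
    ∫ t in Ioi a, Complex.exp (-s*t) = Complex.exp (-s*a) / s := by
  have h := integral_Ioi_of_hasDerivAt_of_tendsto' (f := fun t : ℝ => -Complex.exp (-s*t)/s)
    (fun x _ => GS_exp_deriv (fun h => by simp [h] at hs) x) (GS_exp_integrableOn hs a) (m := 0) ?_
  · rw [h]; ring
  · rw [tendsto_zero_iff_norm_tendsto_zero]
    have : (fun t : ℝ => ‖-Complex.exp (-s*t)/s‖) = fun t => Real.exp (-s.re*t) / ‖s‖ := by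
      ext t; rw [norm_div, norm_neg, GS_norm_exp]
    rw [this]
    have h2 : Tendsto (fun t : ℝ => Real.exp (-s.re*t)) atTop (nhds 0) := by
      apply Real.tendsto_exp_atBot.comp
      exact (tendsto_id.const_mul_atTop_of_neg (by linarith)).comp tendsto_id
    simpa using h2.div_const ‖s‖

lemma GS_integrableOn {g : ℝ → ℂ} {a : ℝ}
    (hg : AEStronglyMeasurable g (volume.restrict (Ioi a))) {C : ℝ}
    (hb : ∀ t : ℝ, a < t → ‖g t‖ ≤ C) {s : ℂ} (hs : 0 < s.re) :
    IntegrableOn (fun t => g t * Complex.exp (-s*t)) (Ioi a) := by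
  apply Integrable.mono' (((exp_neg_integrableOn_Ioi a hs)).const_mul C)
  · exact hg.mul (Complex.continuous_exp.comp (by continuity)).aestronglyMeasurable
  · filter_upwards [ae_restrict_mem measurableSet_Ioi] with t ht
    rw [norm_mul, GS_norm_exp]
    have := Real.exp_pos (-s.re*t)
    exact mul_le_mul_of_nonneg_right (hb t ht) this.le

lemma GS_real_exp_integral {b : ℝ} (hb : 0 < b) (a : ℝ) :
    ∫ t in Ioi a, Real.exp (-b*t) = Real.exp (-b*a) / b := by
  have hd : ∀ x ∈ Ici a, HasDerivAt (fun t : ℝ => -Real.exp (-b*t)/b) (Real.exp (-b*x)) x := by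
    intro x _
    have h0 : HasDerivAt (fun t : ℝ => -b*t) (-b) x := by
      simpa using (hasDerivAt_id x).const_mul (-b)
    have := ((Real.hasDerivAt_exp (-b*x)).comp x h0).neg.div_const b
    refine this.congr_deriv ?_
    rw [div_eq_iff hb.ne']; ring
  have h := integral_Ioi_of_hasDerivAt_of_tendsto' hd (exp_neg_integrableOn_Ioi a hb) (m := 0) ?_
  · rw [h]; ring
  · have h2 : Tendsto (fun t : ℝ => Real.exp (-b*t)) atTop (nhds 0) := by
      apply Real.tendsto_exp_atBot.comp
      exact (tendsto_id.const_mul_atTop_of_neg (by linarith)).comp tendsto_id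
    simpa [neg_div] using (h2.div_const b).neg

lemma GS_tail_norm {g : ℝ → ℂ} {a : ℝ} {C : ℝ}
    (hb : ∀ t : ℝ, a < t → ‖g t‖ ≤ C) {s : ℂ} (hs : 0 < s.re) :
    ‖∫ t in Ioi a, g t * Complex.exp (-s*t)‖ ≤ C * (Real.exp (-s.re*a) / s.re) := by
  have hbd : ∀ t ∈ Ioi a, ‖g t * Complex.exp (-s*t)‖ ≤ C * Real.exp (-s.re*t) := by
    intro t ht
    rw [norm_mul, GS_norm_exp]
    exact mul_le_mul_of_nonneg_right (hb t ht) (Real.exp_pos _).le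
  calc ‖∫ t in Ioi a, g t * Complex.exp (-s*t)‖
      ≤ ∫ t in Ioi a, C * Real.exp (-s.re*t) :=
        norm_integral_le_of_norm_le ((exp_neg_integrableOn_Ioi a hs).const_mul C)
          ((ae_restrict_mem measurableSet_Ioi).mono hbd)
    _ = C * (Real.exp (-s.re*a) / s.re) := by
        rw [integral_const_mul, GS_real_exp_integral hs]


def GSsig (σ : ℝ → ℂ) : ℝ → ℂ := fun u => σ (max u 0)

section sigma
variable {χ σ : ℝ → ℂ} (hχ : ChiOKC χ) (hσ : IsSolnC χ σ)

lemma GS_sig_cont (hσ : IsSolnC χ σ) : Continuous (GSsig σ) :=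
  hσ.1.comp_continuous (continuous_id.max continuous_const) (fun x => le_max_right x 0)

lemma GS_sig_one (hσ : IsSolnC χ σ) {u : ℝ} (hu : u ≤ 1) : GSsig σ u = 1 :=
  hσ.2.1 _ (le_max_right u 0) (max_le hu zero_le_one)

lemma GS_sig_eq (hσ : IsSolnC χ σ) {u : ℝ} (hu : 0 ≤ u) : GSsig σ u = σ u := by
  unfold GSsig; rw [max_eq_left hu]

lemma GS_eqn (hχ : ChiOKC χ) (hσ : IsSolnC χ σ) {u : ℝ} (hu : 0 < u) :
    (u : ℂ) * GSsig σ u = ∫ t in (0:ℝ)..u, χ t * GSsig σ (u - t) := by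
  rcases le_or_gt u 1 with h1 | h1
  · rw [GS_sig_one hσ h1, mul_one]
    have : ∀ t ∈ Set.uIcc (0:ℝ) u, χ t * GSsig σ (u - t) = 1 := by
      intro t ht
      rw [Set.uIcc_of_le hu.le] at ht
      rw [hχ.2.1 t ht.1 (ht.2.trans h1), GS_sig_one hσ (by linarith [ht.1]), mul_one]
    rw [intervalIntegral.integral_congr this]
    simp
  · rw [GS_sig_eq hσ (by linarith)]
    have : ∀ t ∈ Set.uIcc (0:ℝ) u, χ t * GSsig σ (u - t) = χ t * σ (u - t) := by
      intro t ht
      rw [Set.uIcc_of_le hu.le] at ht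
      rw [GS_sig_eq hσ (by linarith [ht.2])]
    rw [intervalIntegral.integral_congr this]
    exact hσ.2.2 u h1

lemma GS_sig_bound (hχ : ChiOKC χ) (hσ : IsSolnC χ σ) (u : ℝ) : ‖GSsig σ u‖ ≤ 1 := by
  rcases le_or_gt u 1 with h1 | h1
  · rw [GS_sig_one hσ h1]; simp
  -- the integral of ‖σ̃‖
  set I : ℝ → ℝ := fun u => ∫ t in (0:ℝ)..u, ‖GSsig σ t‖ with hIdef
  have hcont : Continuous fun t => ‖GSsig σ t‖ := (GS_sig_cont hσ).norm
  have hI : ∀ x : ℝ, HasDerivAt I ‖GSsig σ x‖ x := by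
    intro x
    exact intervalIntegral.integral_hasDerivAt_right (hcont.intervalIntegrable _ _)
      (hcont.stronglyMeasurableAtFilter _ _) hcont.continuousAt
  have hI1 : I 1 = 1 := by
    have : ∀ t ∈ Set.uIcc (0:ℝ) 1, ‖GSsig σ t‖ = 1 := by
      intro t ht
      rw [Set.uIcc_of_le zero_le_one] at ht
      rw [GS_sig_one hσ ht.2]; simp
    show (∫ t in (0:ℝ)..1, ‖GSsig σ t‖) = 1
    rw [intervalIntegral.integral_congr this]; simp
  -- key inequality
  have key : ∀ v : ℝ, 1 ≤ v → v * ‖GSsig σ v‖ ≤ I v := by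
    intro v hv
    have hv0 : (0:ℝ) < v := by linarith
    have h2 : v * ‖GSsig σ v‖ = ‖(v:ℂ) * GSsig σ v‖ := by
      rw [norm_mul, Complex.norm_real, Real.norm_of_nonneg hv0.le]
    rw [h2, GS_eqn hχ hσ hv0]
    have hmeas : AEStronglyMeasurable (fun t => ‖χ t‖ * ‖GSsig σ (v - t)‖)
        (volume.restrict (Set.uIoc (0:ℝ) v)) :=
      (hχ.1.norm.aestronglyMeasurable.mul
        ((hcont.comp (continuous_const.sub continuous_id)).aestronglyMeasurable)).restrict
    have hint2 : IntervalIntegrable (fun t => ‖GSsig σ (v - t)‖) volume 0 v :=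
      (hcont.comp (continuous_const.sub continuous_id)).intervalIntegrable _ _
    have hint1 : IntervalIntegrable (fun t => ‖χ t‖ * ‖GSsig σ (v - t)‖) volume 0 v := by
      apply hint2.mono_fun hmeas
      filter_upwards [ae_restrict_mem measurableSet_uIoc] with t ht
      rw [Set.uIoc_of_le hv0.le] at ht
      rw [Real.norm_of_nonneg (by positivity), Real.norm_of_nonneg (norm_nonneg _)]
      exact mul_le_of_le_one_left (norm_nonneg _) (hχ.2.2 t ht.1.le)
    calc ‖∫ t in (0:ℝ)..v, χ t * GSsig σ (v - t)‖
        ≤ ∫ t in (0:ℝ)..v, ‖χ t * GSsig σ (v - t)‖ :=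
          intervalIntegral.norm_integral_le_integral_norm hv0.le
      _ ≤ ∫ t in (0:ℝ)..v, ‖GSsig σ (v - t)‖ := by
          apply intervalIntegral.integral_mono_on hv0.le _ hint2
          · intro t ht
            rw [norm_mul]
            exact mul_le_of_le_one_left (norm_nonneg _) (hχ.2.2 t ht.1)
          · simpa [norm_mul] using hint1
      _ = I v := by
          show _ = ∫ t in (0:ℝ)..v, ‖GSsig σ t‖
          have := intervalIntegral.integral_comp_sub_left (a := (0:ℝ)) (b := v)
            (fun t => ‖GSsig σ t‖) v
          simpa using this
  -- I v / v is antitone on [1, ∞)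
  have hanti : AntitoneOn (fun v => I v / v) (Set.Ici 1) := by
    apply antitoneOn_of_deriv_nonpos (convex_Ici 1)
    · apply ContinuousOn.div
      · exact (fun x _ => (hI x).continuousAt.continuousWithinAt)
      · exact continuousOn_id
      · intro x hx; exact ne_of_gt (by linarith [hx.out])
    · intro x hx
      rw [interior_Ici] at hx
      have hx1 : (1:ℝ) < x := hx
      exact (((hI x).div (hasDerivAt_id x) (by positivity)).differentiableAt).differentiableWithinAt
    · intro x hx
      rw [interior_Ici] at hx
      have hx1 : (1:ℝ) < x := hx
      have hd := (hI x).div (hasDerivAt_id x) (ne_of_gt (show (0:ℝ) < x by positivity))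
      have hdeq : deriv (fun v => I v / v) x = (‖GSsig σ x‖ * x - I x * 1) / x ^ 2 := hd.deriv
      rw [hdeq]
      have := key x hx1.le
      have hx2 : (0:ℝ) < x ^ 2 := by positivity
      apply div_nonpos_of_nonpos_of_nonneg _ hx2.le
      nlinarith [this]
  have h3 : I u / u ≤ 1 := by
    have := hanti (Set.self_mem_Ici) (Set.mem_Ici.mpr h1.le) h1.le
    simpa [hI1] using this
  have h4 := key u h1.le
  have hu0 : (0:ℝ) < u := by linarith
  rw [div_le_one hu0] at h3
  calc ‖GSsig σ u‖ = u * ‖GSsig σ u‖ / u := by field_simp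
    _ ≤ I u / u := by gcongr
    _ ≤ 1 := by rw [div_le_one hu0]; exact h3

end sigma

section conv
variable {χ σ : ℝ → ℂ} {s : ℂ}

lemma GS_conv (hχ : ChiOKC χ) (hσ : IsSolnC χ σ) (hs : 0 < s.re) :
    Laplace (fun u : ℝ => (u:ℂ) * GSsig σ u) s = Laplace χ s * Laplace (GSsig σ) s := by
  classical
  set L : ℂ →L[ℝ] ℂ →L[ℝ] ℂ := ContinuousLinearMap.mul ℝ ℂ with hL
  set f : ℝ → ℂ := (Set.Ioi (0:ℝ)).indicator (fun t => χ t * Complex.exp (-s*t)) with hf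
  set g : ℝ → ℂ := (Set.Ioi (0:ℝ)).indicator (fun t => GSsig σ t * Complex.exp (-s*t)) with hg
  have hfi : Integrable f := by
    rw [hf, integrable_indicator_iff measurableSet_Ioi]
    exact GS_integrableOn (hχ.1.aestronglyMeasurable.restrict)
      (fun t ht => hχ.2.2 t ht.le) hs
  have hgi : Integrable g := by
    rw [hg, integrable_indicator_iff measurableSet_Ioi]
    exact GS_integrableOn ((GS_sig_cont hσ).aestronglyMeasurable.restrict)
      (fun t _ => GS_sig_bound hχ hσ t) hs
  have hconv := integral_convolution L hfi hgi
  -- identify the convolution pointwise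
  have hcv : ∀ u : ℝ, convolution f g L volume u =
      (Set.Ioi (0:ℝ)).indicator (fun u => (u:ℂ) * GSsig σ u * Complex.exp (-s*u)) u := by
    intro u
    rcases le_or_gt u 0 with hu | hu
    · rw [Set.indicator_of_notMem (by simpa using hu)]
      rw [convolution]
      apply integral_eq_zero_of_ae
      filter_upwards with t
      rcases le_or_gt t 0 with ht | ht
      · rw [hf, Set.indicator_of_notMem (by simpa using ht)]
        simp
      · rw [hg, Set.indicator_of_notMem (by simp; linarith)]
        simp
    · rw [Set.indicator_of_mem (Set.mem_Ioi.mpr hu)]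
      rw [convolution]
      have hptw : ∀ t : ℝ, L (f t) (g (u - t)) =
          (Set.Ioo (0:ℝ) u).indicator (fun t => χ t * GSsig σ (u - t) * Complex.exp (-s*u)) t := by
        intro t
        by_cases ht : 0 < t
        · by_cases htu : t < u
          · rw [Set.indicator_of_mem (Set.mem_Ioo.mpr ⟨ht, htu⟩), hf, hg,
              Set.indicator_of_mem (Set.mem_Ioi.mpr ht),
              Set.indicator_of_mem (Set.mem_Ioi.mpr (by linarith : (0:ℝ) < u - t))]
            simp only [hL, ContinuousLinearMap.mul_apply']
            rw [mul_mul_mul_comm, ← Complex.exp_add]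
            congr 2
            push_cast
            ring
          · rw [Set.indicator_of_notMem (by simp [Set.mem_Ioo]; intro; linarith), hg,
              Set.indicator_of_notMem (by simp; linarith)]
            simp
        · rw [Set.indicator_of_notMem (fun hm => ht hm.1), hf,
            Set.indicator_of_notMem (by simpa using ht)]
          simp
      rw [MeasureTheory.integral_congr_ae (Filter.Eventually.of_forall hptw),
        integral_indicator measurableSet_Ioo]
      rw [← MeasureTheory.integral_Ioc_eq_integral_Ioo, MeasureTheory.integral_mul_const,
        ← intervalIntegral.integral_of_le hu.le, ← GS_eqn hχ hσ hu]
  -- put everything together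
  have h1 : ∫ u, convolution f g L volume u =
      Laplace (fun u : ℝ => (u:ℂ) * GSsig σ u) s := by
    rw [MeasureTheory.integral_congr_ae (Filter.Eventually.of_forall hcv),
      integral_indicator measurableSet_Ioi]
    rfl
  have h2 : ∫ t, f t = Laplace χ s := by
    rw [hf, integral_indicator measurableSet_Ioi]; rfl
  have h3 : ∫ t, g t = Laplace (GSsig σ) s := by
    rw [hg, integral_indicator measurableSet_Ioi]; rfl
  rw [h1, h2, h3] at hconv
  simpa [hL] using hconv

end conv

lemma GS_texp_le {b t : ℝ} (hb : 0 < b) (ht : 0 < t) :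
    t * Real.exp (-b*t) ≤ (2/b) * Real.exp (-(b/2)*t) := by
  have h1 : b/2*t ≤ Real.exp (b/2*t) := by
    have := Real.add_one_le_exp (b/2*t)
    linarith
  have h2 : t ≤ (2/b) * Real.exp (b/2*t) := by
    have h3 := mul_le_mul_of_nonneg_left h1 (by positivity : (0:ℝ) ≤ 2/b)
    calc t = (2/b) * (b/2*t) := by field_simp
      _ ≤ _ := h3
  calc t * Real.exp (-b*t) ≤ ((2/b) * Real.exp (b/2*t)) * Real.exp (-b*t) := by
        apply mul_le_mul_of_nonneg_right h2 (Real.exp_pos _).le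
    _ = (2/b) * Real.exp (-(b/2)*t) := by
        rw [mul_assoc, ← Real.exp_add]; ring_nf

lemma GS_hasDerivAt {g : ℝ → ℂ}
    (hg : AEStronglyMeasurable g (volume.restrict (Set.Ioi 0))) {C : ℝ}
    (hb : ∀ t : ℝ, 0 < t → ‖g t‖ ≤ C) {s : ℂ} (hs : 0 < s.re) :
    HasDerivAt (Laplace g)
      (-∫ t in Set.Ioi (0:ℝ), (t:ℂ) * g t * Complex.exp (-s*t)) s := by
  have hC : 0 ≤ C := le_trans (norm_nonneg _) (hb 1 one_pos)
  set b := s.re/2 with hbdef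
  have hb2 : 0 < b := by positivity
  have key := hasDerivAt_integral_of_dominated_loc_of_deriv_le
    (μ := volume.restrict (Set.Ioi (0:ℝ)))
    (F := fun (x : ℂ) (t : ℝ) => g t * Complex.exp (-x*t))
    (F' := fun (x : ℂ) (t : ℝ) => g t * (-t * Complex.exp (-x*t)))
    (x₀ := s) (s := Metric.ball s b)
    (bound := fun t => C * ((2/b) * Real.exp (-(b/2)*t)))
    (Metric.ball_mem_nhds s hb2) ?_ ?_ ?_ ?_ ?_ ?_
  · have heq : (∫ t in Set.Ioi (0:ℝ), g t * (-(t:ℂ) * Complex.exp (-s*t)))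
        = -∫ t in Set.Ioi (0:ℝ), (t:ℂ) * g t * Complex.exp (-s*t) := by
      rw [← MeasureTheory.integral_neg]
      apply MeasureTheory.integral_congr_ae
      filter_upwards with t
      ring
    rw [heq] at key
    exact key.2
  · filter_upwards with x
    exact hg.mul (Complex.continuous_exp.comp (by continuity)).aestronglyMeasurable
  · exact GS_integrableOn hg hb hs
  · exact hg.mul ((by continuity : Continuous fun t : ℝ => -(t:ℂ) * Complex.exp (-s*t))).aestronglyMeasurable
  · filter_upwards [ae_restrict_mem measurableSet_Ioi] with t ht x hx
    have hxre : b ≤ x.re := by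
      have h1 : |x.re - s.re| ≤ ‖x - s‖ := by
        rw [← Complex.sub_re]; exact Complex.abs_re_le_norm _
      rw [Metric.mem_ball, Complex.dist_eq] at hx
      have := abs_le.mp h1
      rw [hbdef]; linarith [this.1, hx.le]
    have ht' : (0:ℝ) < t := ht
    rw [norm_mul, norm_mul, GS_norm_exp, norm_neg, Complex.norm_real, Real.norm_of_nonneg ht'.le]
    calc ‖g t‖ * (t * Real.exp (-x.re*t))
        ≤ C * (t * Real.exp (-b*t)) := by
          apply mul_le_mul (hb t ht') _ (by positivity) hC
          apply mul_le_mul_of_nonneg_left _ ht'.le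
          apply Real.exp_le_exp.mpr
          nlinarith
      _ ≤ C * ((2/b) * Real.exp (-(b/2)*t)) :=
          mul_le_mul_of_nonneg_left (GS_texp_le hb2 ht) hC
  · exact ((exp_neg_integrableOn_Ioi 0 (by positivity : 0 < b/2)).const_mul _).const_mul C
  · filter_upwards with t x _
    have h0 : HasDerivAt (fun x : ℂ => -x*(t:ℂ)) (-t) x := by
      simpa using ((hasDerivAt_id x).neg.mul_const (t:ℂ))
    have := (Complex.hasDerivAt_exp (-x*t)).comp x h0
    have h2 := this.const_mul (g t)
    refine h2.congr_deriv ?_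
    ring

section main
variable {χ σ : ℝ → ℂ}

lemma GS_h_meas (hχ : ChiOKC χ) :
    AEStronglyMeasurable (fun v : ℝ => (1 - χ v) / (v:ℂ)) (volume.restrict (Set.Ioi 0)) :=
  (((measurable_const.sub hχ.1).div
    (Complex.measurable_ofReal.comp measurable_id)).aestronglyMeasurable).restrict

lemma GS_h_bound (hχ : ChiOKC χ) : ∀ t : ℝ, 0 < t → ‖(1 - χ t) / (t:ℂ)‖ ≤ 2 := by
  intro t ht
  rcases le_or_gt t 1 with h|h
  · rw [hχ.2.1 t ht.le h]; simp
  · rw [norm_div, Complex.norm_real, Real.norm_of_nonneg ht.le]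
    have h2 : ‖(1:ℂ) - χ t‖ ≤ 2 := by
      have := hχ.2.2 t ht.le
      calc ‖(1:ℂ) - χ t‖ ≤ ‖(1:ℂ)‖ + ‖χ t‖ := norm_sub_le _ _
        _ ≤ 2 := by rw [norm_one]; linarith
    rw [div_le_iff₀ ht]
    nlinarith [norm_nonneg ((1:ℂ) - χ t)]

theorem laplace_identity' (hχ : ChiOKC χ) (hσ : IsSolnC χ σ)
    (s : ℂ) (hs : 0 < s.re) :
    Laplace σ s =
      (1 / s) * Complex.exp (-(Laplace (fun v : ℝ => (1 - χ v) / ((v : ℝ) : ℂ)) s)) := by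
  set σ' := GSsig σ with hσ'def
  have hone : ∀ t : ℝ, t ≤ 1 → σ' t = 1 := fun t ht => GS_sig_one hσ ht
  have heqσ : ∀ t : ℝ, 0 ≤ t → σ' t = σ t := fun t ht => GS_sig_eq hσ ht
  set h : ℝ → ℂ := fun v => (1 - χ v) / (v:ℂ) with hhdef
  have hσm : AEStronglyMeasurable σ' (volume.restrict (Set.Ioi 0)) :=
    ((GS_sig_cont hσ).aestronglyMeasurable).restrict
  have hσb : ∀ t : ℝ, 0 < t → ‖σ' t‖ ≤ 1 := fun t _ => GS_sig_bound hχ hσ t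
  have hχm : AEStronglyMeasurable χ (volume.restrict (Set.Ioi 0)) :=
    hχ.1.aestronglyMeasurable.restrict
  have hχb : ∀ t : ℝ, 0 < t → ‖χ t‖ ≤ 1 := fun t ht => hχ.2.2 t ht.le
  set U : Set ℂ := {z | 0 < z.re} with hU
  have hUconv : Convex ℝ U := convex_halfSpace_re_gt 0
  set Φ : ℂ → ℂ := fun z => z * Laplace σ' z * Complex.exp (Laplace h z) with hΦdef
  -- derivative of Φ vanishes on U
  have hΦderiv : ∀ z ∈ U, HasDerivAt Φ 0 z := by
    intro z hz
    have hz' : 0 < z.re := hz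
    have hz0 : z ≠ 0 := fun h0 => by simp [h0] at hz'
    have hF : HasDerivAt (Laplace σ') (-(Laplace χ z * Laplace σ' z)) z := by
      have h1 := GS_hasDerivAt hσm hσb hz'
      have h2 : (∫ t in Set.Ioi (0:ℝ), (t:ℂ) * σ' t * Complex.exp (-z*t))
          = Laplace (fun u : ℝ => (u:ℂ) * σ' u) z := rfl
      rw [h2, GS_conv hχ hσ hz'] at h1
      exact h1
    have hH : HasDerivAt (Laplace h) (Laplace χ z - 1/z) z := by
      have h1 := GS_hasDerivAt (GS_h_meas hχ) (GS_h_bound hχ) hz'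
      have heq : -(∫ t in Set.Ioi (0:ℝ), (t:ℂ) * h t * Complex.exp (-z*t))
          = Laplace χ z - 1/z := by
        have e1 : ∀ t ∈ Set.Ioi (0:ℝ), (t:ℂ) * h t * Complex.exp (-z*t)
            = Complex.exp (-z*t) - χ t * Complex.exp (-z*t) := by
          intro t ht
          have ht0 : (t:ℂ) ≠ 0 := Complex.ofReal_ne_zero.mpr (ne_of_gt ht)
          rw [hhdef]
          field_simp
        rw [setIntegral_congr_fun measurableSet_Ioi e1,
          MeasureTheory.integral_sub (GS_exp_integrableOn hz' 0) (GS_integrableOn hχm hχb hz'),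
          GS_exp_integral hz' 0]
        simp only [Complex.ofReal_zero, mul_zero, Complex.exp_zero]
        rw [neg_sub]
        rfl
      rw [heq] at h1
      exact h1
    have d1 := ((hasDerivAt_id z).mul hF).mul hH.cexp
    have hzero : (1 * Laplace σ' z + id z * -(Laplace χ z * Laplace σ' z)) *
          Complex.exp (Laplace h z) +
        id z * Laplace σ' z * (Complex.exp (Laplace h z) * (Laplace χ z - 1/z)) = 0 := by
      simp only [id]
      field_simp
      ring
    simp only [Pi.mul_apply] at d1
    rw [hzero] at d1
    exact d1
  -- Φ is constant on U
  have hconst : ∀ z ∈ U, ∀ w ∈ U, Φ z = Φ w := by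
    intro z hz w hw
    have hb := hUconv.norm_image_sub_le_of_norm_hasFDerivWithin_le
      (C := 0)
      (f' := fun _ : ℂ => ContinuousLinearMap.smulRight (1 : ℂ →L[ℂ] ℂ) (0:ℂ))
      (fun x hx => (hΦderiv x hx).hasFDerivAt.hasFDerivWithinAt)
      (fun x _ => by simp) hz hw
    have h2 : Φ w = Φ z := by
      rw [← sub_eq_zero]
      exact norm_eq_zero.mp (le_antisymm (by simpa using hb) (norm_nonneg _))
    exact h2.symm
  -- the limit of Φ along the real axis
  have hA : Tendsto (fun x : ℝ => (x:ℂ) * Laplace σ' x) atTop (nhds 1) := by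
    have hbnd : ∀ᶠ x : ℝ in atTop, ‖(x:ℂ) * Laplace σ' x - 1‖ ≤ 2 * Real.exp (-x) := by
      filter_upwards [eventually_gt_atTop (0:ℝ)] with x hx
      have hxre : ((x:ℂ)).re = x := Complex.ofReal_re x
      have hxs : 0 < ((x:ℂ)).re := by rw [hxre]; exact hx
      have hx0 : (x:ℂ) ≠ 0 := Complex.ofReal_ne_zero.mpr (ne_of_gt hx)
      have hint : IntegrableOn (fun t : ℝ => σ' t * Complex.exp (-(x:ℂ)*t)) (Set.Ioi 0) :=
        GS_integrableOn hσm hσb hxs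
      have hsplit : Laplace σ' (x:ℂ) =
          (∫ t in Set.Ioc (0:ℝ) 1, σ' t * Complex.exp (-(x:ℂ)*t)) +
          ∫ t in Set.Ioi (1:ℝ), σ' t * Complex.exp (-(x:ℂ)*t) := by
        rw [show Laplace σ' (x:ℂ) = ∫ t in Set.Ioi (0:ℝ), σ' t * Complex.exp (-(x:ℂ)*t) from rfl,
          ← Set.Ioc_union_Ioi_eq_Ioi (zero_le_one), MeasureTheory.setIntegral_union
            (Set.Ioc_disjoint_Ioi le_rfl) measurableSet_Ioi
            (hint.mono_set (by intro t ht; exact ht.1))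
            (hint.mono_set (fun t ht => lt_trans one_pos ht))]
      have hIoc : (∫ t in Set.Ioc (0:ℝ) 1, σ' t * Complex.exp (-(x:ℂ)*t)) =
          (1 - Complex.exp (-(x:ℂ))) / (x:ℂ) := by
        have e1 : ∀ t ∈ Set.Ioc (0:ℝ) 1, σ' t * Complex.exp (-(x:ℂ)*t) =
            Complex.exp (-(x:ℂ)*t) := by
          intro t ht
          rw [hone t ht.2, one_mul]
        rw [setIntegral_congr_fun measurableSet_Ioc e1]
        have hsplit2 : (∫ t in Set.Ioi (0:ℝ), Complex.exp (-(x:ℂ)*t)) =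
            (∫ t in Set.Ioc (0:ℝ) 1, Complex.exp (-(x:ℂ)*t)) +
            ∫ t in Set.Ioi (1:ℝ), Complex.exp (-(x:ℂ)*t) := by
          rw [← Set.Ioc_union_Ioi_eq_Ioi (zero_le_one), MeasureTheory.setIntegral_union
            (Set.Ioc_disjoint_Ioi le_rfl) measurableSet_Ioi
            ((GS_exp_integrableOn hxs 0).mono_set (by intro t ht; exact ht.1))
            ((GS_exp_integrableOn hxs 0).mono_set (fun t ht => lt_trans one_pos ht))]
        rw [GS_exp_integral hxs 0, GS_exp_integral hxs 1] at hsplit2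
        have := hsplit2
        field_simp at this ⊢
        simp only [Complex.ofReal_zero, Complex.ofReal_one, mul_zero, mul_one, neg_zero, Complex.exp_zero] at this
        linear_combination -this
      have htail : ‖∫ t in Set.Ioi (1:ℝ), σ' t * Complex.exp (-(x:ℂ)*t)‖ ≤
          Real.exp (-x) / x := by
        have := GS_tail_norm (g := σ') (a := 1) (C := 1)
          (fun t ht => hσb t (lt_trans one_pos ht)) hxs
        simpa [hxre] using this
      calc ‖(x:ℂ) * Laplace σ' x - 1‖
          = ‖-Complex.exp (-(x:ℂ)) + (x:ℂ) * ∫ t in Set.Ioi (1:ℝ),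
              σ' t * Complex.exp (-(x:ℂ)*t)‖ := by
            congr 1
            rw [hsplit, hIoc]
            field_simp
            ring
        _ ≤ ‖-Complex.exp (-(x:ℂ))‖ + ‖(x:ℂ) * ∫ t in Set.Ioi (1:ℝ),
              σ' t * Complex.exp (-(x:ℂ)*t)‖ := norm_add_le _ _
        _ ≤ Real.exp (-x) + x * (Real.exp (-x) / x) := by
            apply add_le_add
            · rw [norm_neg]
              have : -(x:ℂ) = -(x:ℂ) * ((1:ℝ):ℂ) := by simp
              rw [this, GS_norm_exp]
              simp [hxre]
            · rw [norm_mul, Complex.norm_real, Real.norm_of_nonneg hx.le]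
              exact mul_le_mul_of_nonneg_left htail hx.le
        _ = 2 * Real.exp (-x) := by field_simp; ring
    have hexp : Tendsto (fun x : ℝ => 2 * Real.exp (-x)) atTop (nhds 0) := by
      simpa using (Real.tendsto_exp_neg_atTop_nhds_zero.const_mul 2)
    have h0 : Tendsto (fun x : ℝ => (x:ℂ) * Laplace σ' x - 1) atTop (nhds 0) :=
      squeeze_zero_norm' hbnd hexp
    simpa using h0.add_const (1:ℂ)
  have hB : Tendsto (fun x : ℝ => Laplace h (x:ℂ)) atTop (nhds 0) := by
    have hbnd : ∀ᶠ x : ℝ in atTop, ‖Laplace h (x:ℂ)‖ ≤ 2 * Real.exp (-x) := by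
      filter_upwards [eventually_ge_atTop (1:ℝ)] with x hx
      have hx0 : (0:ℝ) < x := lt_of_lt_of_le one_pos hx
      have hxre : ((x:ℂ)).re = x := Complex.ofReal_re x
      have hxs : 0 < ((x:ℂ)).re := by rw [hxre]; exact hx0
      have hint : IntegrableOn (fun t : ℝ => h t * Complex.exp (-(x:ℂ)*t)) (Set.Ioi 0) :=
        GS_integrableOn (GS_h_meas hχ) (GS_h_bound hχ) hxs
      have hsplit : Laplace h (x:ℂ) = ∫ t in Set.Ioi (1:ℝ), h t * Complex.exp (-(x:ℂ)*t) := by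
        rw [show Laplace h (x:ℂ) = ∫ t in Set.Ioi (0:ℝ), h t * Complex.exp (-(x:ℂ)*t) from rfl,
          ← Set.Ioc_union_Ioi_eq_Ioi (zero_le_one), MeasureTheory.setIntegral_union
            (Set.Ioc_disjoint_Ioi le_rfl) measurableSet_Ioi
            (hint.mono_set (by intro t ht; exact ht.1))
            (hint.mono_set (fun t ht => lt_trans one_pos ht))]
        have e0 : ∀ t ∈ Set.Ioc (0:ℝ) 1, h t * Complex.exp (-(x:ℂ)*t) = 0 := by
          intro t ht
          rw [hhdef]
          simp only []
          rw [hχ.2.1 t ht.1.le ht.2]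
          simp
        rw [setIntegral_congr_fun measurableSet_Ioc e0]
        simp
      rw [hsplit]
      have := GS_tail_norm (g := h) (a := 1) (C := 2)
        (fun t ht => GS_h_bound hχ t (lt_trans one_pos ht)) hxs
      calc ‖∫ t in Set.Ioi (1:ℝ), h t * Complex.exp (-(x:ℂ)*t)‖
          ≤ 2 * (Real.exp (-((x:ℂ)).re * 1) / ((x:ℂ)).re) := this
        _ ≤ 2 * Real.exp (-x) := by
            rw [hxre, mul_one]
            apply mul_le_mul_of_nonneg_left _ (by norm_num)
            rw [div_le_iff₀ hx0]
            nlinarith [Real.exp_pos (-x)]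
    have hexp : Tendsto (fun x : ℝ => 2 * Real.exp (-x)) atTop (nhds 0) := by
      simpa using (Real.tendsto_exp_neg_atTop_nhds_zero.const_mul 2)
    exact squeeze_zero_norm' hbnd hexp
  have hlim : Tendsto (fun x : ℝ => Φ (x:ℂ)) atTop (nhds 1) := by
    have hC : Tendsto (fun x : ℝ => Complex.exp (Laplace h (x:ℂ))) atTop (nhds 1) := by
      have := (Complex.continuous_exp.tendsto 0).comp hB
      simpa [Function.comp_def] using this
    have := hA.mul hC
    simpa using this
  -- conclude Φ s = 1
  have hΦs : Φ s = 1 := by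
    have hev : ∀ᶠ x : ℝ in atTop, Φ (x:ℂ) = Φ s := by
      filter_upwards [eventually_gt_atTop (0:ℝ)] with x hx
      exact hconst _ (by simpa [hU] using hx) s hs
    have h2 : Tendsto (fun x : ℝ => Φ (x:ℂ)) atTop (nhds (Φ s)) :=
      tendsto_const_nhds.congr' (hev.mono fun x hx => hx.symm)
    exact tendsto_nhds_unique h2 hlim
  -- finish
  have hs0 : s ≠ 0 := fun h0 => by simp [h0] at hs
  have hLσ : Laplace σ s = Laplace σ' s := by
    apply setIntegral_congr_fun measurableSet_Ioi
    intro t ht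
    have := heqσ t (le_of_lt ht)
    simp only [this]
  rw [hLσ, Complex.exp_neg]
  rw [hΦdef] at hΦs
  simp only [] at hΦs
  field_simp [Complex.exp_ne_zero]
  linear_combination hΦs

end main


/-- Identity (3.1) of Granville–Soundararajan, "The number of unsieved integers up
to x": for `Re s > 0`, `L(σ,s) = (1/s) exp(-L((1-χ(v))/v, s))`. -/
theorem laplace_identity (χ σ : ℝ → ℂ) (hχ : ChiOKC χ) (hσ : IsSolnC χ σ)
    (s : ℂ) (hs : 0 < s.re) :
    Laplace σ s =
      (1 / s) * Complex.exp (-(Laplace (fun v : ℝ => (1 - χ v) / ((v : ℝ) : ℂ)) s)) :=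
  laplace_identity' hχ hσ s hs
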